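/- arXiv:0805.4436 — 2 statements merged into one kernel-verified Lean document; each statement's English description precedes it below -/
import Mathlib

section
/- Let C be a category, S a set of morphisms of C, and loc : C → C[S⁻¹] the localization functor. If Y is an object of C such that the functor X ↦ Hom_C(X, Y) sends every morphism in S to a bijection, then for every object X of C the map Hom_C(X, Y) → Hom_{C[S⁻¹]}(loc X, loc Y) induced by loc is a bijection. -/
open CategoryTheory Opposite

universe v u

private lemma localization_hom_bijective_of_inverts_aux
    {C : Type u} [Category.{v} C] (S : MorphismProperty C) (Y : C)
    (hY : ∀ ⦃X X' : C⦄ (s : X ⟶ X'), S s →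
      Function.Bijective (fun g : X' ⟶ Y => s ≫ g)) (X : C) :
    Function.Bijective (fun g : X ⟶ Y => S.Q.map g) := by
  -- the presheaf `Hom(-, Y)`, lifted to a large enough universe
  set F : Cᵒᵖ ⥤ Type (max u v) := yoneda.obj Y ⋙ uliftFunctor.{u} with hFdef
  have hF : S.op.IsInvertedBy F := by
    intro A B s hs
    rw [CategoryTheory.isIso_iff_bijective]
    exact (Equiv.ulift.trans
      ((Equiv.ofBijective _ (hY s.unop hs)).trans Equiv.ulift.symm)).bijective
  -- lift `F` to the localized category
  set G : (S.Localization)ᵒᵖ ⥤ Type (max u v) := Localization.lift F hF S.Q.op with hGdef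
  set e : S.Q.op ⋙ G ≅ F := Localization.Lifting.iso S.Q.op S.op F G with hedef
  set H : (S.Localization)ᵒᵖ ⥤ Type (max u v) := yoneda.obj (S.Q.obj Y) with hHdef
  -- the natural transformation `g ↦ S.Q.map g`
  set φ : F ⟶ S.Q.op ⋙ H :=
    { app := fun A => TypeCat.ofHom fun g => S.Q.map g.down
      naturality := fun A B h => by
        ext g
        exact S.Q.map_comp h.unop g.down } with hφdef
  set τ : G ⟶ H := Localization.liftNatTrans S.Q.op S.op F (S.Q.op ⋙ H) G H φ with hτdef
  -- the element of `G` corresponding to the identity of `Y`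
  set y₀ : G.obj (op (S.Q.obj Y)) := e.inv.app (op Y) (ULift.up (𝟙 Y)) with hy₀def
  set σ : H ⟶ G := yonedaEquiv.symm y₀ with hσdef
  have hτapp : ∀ (A : C) (x : G.obj (op (S.Q.obj A))),
      τ.app (op (S.Q.obj A)) x = S.Q.map (e.hom.app (op A) x).down := by
    intro A x
    have := types_congr_hom (Localization.liftNatTrans_app S.Q.op S.op F (S.Q.op ⋙ H) G H φ (op A)) x
    simp at this
    exact this
  have hσapp : ∀ (A : C) (f : S.Q.obj A ⟶ S.Q.obj Y),
      σ.app (op (S.Q.obj A)) f = G.map f.op y₀ := by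
    intro A f
    exact yonedaEquiv_symm_app_apply y₀ (op (S.Q.obj A)) f
  -- the retraction
  have retr : ∀ g : X ⟶ Y,
      (e.hom.app (op X) (σ.app (op (S.Q.obj X)) (S.Q.map g))).down = g := by
    intro g
    rw [hσapp]
    have hnat := types_congr_hom (e.hom.naturality g.op) y₀
    have h0 : G.map (S.Q.map g).op y₀ = (S.Q.op ⋙ G).map g.op y₀ := rfl
    rw [h0]
    have h1 : e.hom.app (op X) ((S.Q.op ⋙ G).map g.op y₀)
        = F.map g.op (e.hom.app (op Y) y₀) := by simpa using hnat
    rw [h1]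
    have h2 : e.hom.app (op Y) y₀ = ULift.up (𝟙 Y) := by
      rw [hy₀def]
      exact types_congr_hom (e.inv_hom_id_app (op Y)) (ULift.up (𝟙 Y))
    rw [h2]
    show g ≫ 𝟙 Y = g
    simp
  -- `σ ≫ τ = 𝟙 H` via the Yoneda lemma
  have hστ : σ ≫ τ = 𝟙 H := by
    apply yonedaEquiv.injective
    rw [yonedaEquiv_apply, yonedaEquiv_apply]
    have h1 : σ.app (op (S.Q.obj Y)) (𝟙 (S.Q.obj Y)) = y₀ := by
      rw [hσapp]; simp
    show τ.app _ (σ.app _ (𝟙 (S.Q.obj Y))) = 𝟙 (S.Q.obj Y)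
    rw [h1, hτapp Y y₀]
    have h2 : e.hom.app (op Y) y₀ = ULift.up (𝟙 Y) := by
      rw [hy₀def]
      exact types_congr_hom (e.inv_hom_id_app (op Y)) (ULift.up (𝟙 Y))
    rw [h2, S.Q.map_id]
  have hsect : ∀ f : S.Q.obj X ⟶ S.Q.obj Y,
      S.Q.map (e.hom.app (op X) (σ.app (op (S.Q.obj X)) f)).down = f := by
    intro f
    have := types_congr_hom (congr_fun (congr_arg NatTrans.app hστ) (op (S.Q.obj X))) f
    rw [← hτapp X (σ.app (op (S.Q.obj X)) f)]
    exact this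
  rw [Function.bijective_iff_has_inverse]
  exact ⟨fun f => (e.hom.app (op X) (σ.app (op (S.Q.obj X)) f)).down, retr, hsect⟩

/-- If the functor `Hom(-, Y)` sends every morphism of `S` to a bijection, then for
every `X` the localization functor induces a bijection
`Hom_C(X, Y) ≃ Hom_{C[S⁻¹]}(loc X, loc Y)`. -/
theorem localization_hom_bijective_of_inverts
    {C : Type*} [Category C] (S : MorphismProperty C) (Y : C)
    (hY : ∀ ⦃X X' : C⦄ (s : X ⟶ X'), S s →
      Function.Bijective (fun g : X' ⟶ Y => s ≫ g)) (X : C) :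
    Function.Bijective (fun g : X ⟶ Y => S.Q.map g) :=
  localization_hom_bijective_of_inverts_aux S Y hY X
end

section
/- Let C be a category with coproducts, and S a class of morphisms stable under coproducts, such that the localization C[S⁻¹] admits a right calculus of fractions. Then a coproduct of a family of objects in C is also a coproduct of (the images of) the same family in C[S⁻¹]; in particular the localization functor C → C[S⁻¹] preserves coproducts. -/
open CategoryTheory CategoryTheory.Limits

namespace LocCoprodAux

variable {C : Type*} [Category C] (S : MorphismProperty C)
  [S.HasRightCalculusOfFractions]
  {J : Type*} [HasCoproducts C]

/-- The images of the coproduct inclusions are jointly epimorphic in the localization. -/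
lemma jointly_epi
    (hstable : ∀ (X Y : J → C) (f : ∀ j, X j ⟶ Y j),
      (∀ j, S (f j)) → S (Limits.Sigma.map f))
    (X : J → C) {T : S.Localization} (a b : S.Q.obj (∐ X) ⟶ T)
    (h : ∀ j, S.Q.map (Sigma.ι X j) ≫ a = S.Q.map (Sigma.ι X j) ≫ b) : a = b := by
  have hES : S.Q.EssSurj := Localization.essSurj S.Q S
  obtain ⟨T₀, ⟨e⟩⟩ : ∃ T₀, Nonempty (S.Q.obj T₀ ≅ T) := ⟨_, ⟨S.Q.objObjPreimageIso T⟩⟩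
  rw [← cancel_mono e.inv]
  obtain ⟨φ, hφ⟩ := Localization.exists_rightFraction S.Q S (a ≫ e.inv)
  obtain ⟨ψ, hψ⟩ := Localization.exists_rightFraction S.Q S (b ≫ e.inv)
  obtain ⟨ρ, hρ⟩ := MorphismProperty.LeftFraction.exists_rightFraction
    (MorphismProperty.LeftFraction.mk φ.s ψ.s ψ.hs)
  dsimp at hρ
  have hv : S (ρ.s ≫ φ.s) := S.comp_mem _ _ ρ.hs φ.hs
  have hIv : IsIso (S.Q.map (ρ.s ≫ φ.s)) := Localization.inverts S.Q S _ hv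
  have hIφ : IsIso (S.Q.map φ.s) := Localization.inverts S.Q S _ φ.hs
  have hIψ : IsIso (S.Q.map ψ.s) := Localization.inverts S.Q S _ ψ.hs
  have ha : a ≫ e.inv = inv (S.Q.map (ρ.s ≫ φ.s)) ≫ S.Q.map (ρ.s ≫ φ.f) := by
    rw [← cancel_epi (S.Q.map (ρ.s ≫ φ.s)), IsIso.hom_inv_id_assoc, hφ,
      S.Q.map_comp, S.Q.map_comp, Category.assoc,
      MorphismProperty.RightFraction.map_s_comp_map]
  have hb : b ≫ e.inv = inv (S.Q.map (ρ.s ≫ φ.s)) ≫ S.Q.map (ρ.f ≫ ψ.f) := by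
    rw [← cancel_epi (S.Q.map (ρ.s ≫ φ.s)), IsIso.hom_inv_id_assoc, hψ]
    conv_lhs => rw [hρ]
    rw [S.Q.map_comp, S.Q.map_comp, Category.assoc,
      MorphismProperty.RightFraction.map_s_comp_map]
  have key : ∀ j : J, ∃ (Wj : C) (tj : Wj ⟶ X j) (hj : Wj ⟶ ρ.X'),
      S tj ∧ tj ≫ Sigma.ι X j = hj ≫ (ρ.s ≫ φ.s) ∧ ∃ (Rj : C) (r : Rj ⟶ Wj), S r ∧
        (r ≫ hj) ≫ (ρ.s ≫ φ.f) = (r ≫ hj) ≫ (ρ.f ≫ ψ.f) := by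
    intro j
    obtain ⟨σj, hσj⟩ := MorphismProperty.LeftFraction.exists_rightFraction
      (MorphismProperty.LeftFraction.mk (Sigma.ι X j) (ρ.s ≫ φ.s) hv)
    dsimp at hσj
    have h0 : S.Q.map (Sigma.ι X j) ≫ a ≫ e.inv = S.Q.map (Sigma.ι X j) ≫ b ≫ e.inv := by
      rw [← Category.assoc, h j, Category.assoc]
    rw [ha, hb] at h0
    have lhs : ∀ (g : ρ.X' ⟶ T₀),
        S.Q.map σj.s ≫ S.Q.map (Sigma.ι X j) ≫ inv (S.Q.map (ρ.s ≫ φ.s)) ≫ S.Q.map g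
          = S.Q.map (σj.f ≫ g) := by
      intro g
      rw [← Category.assoc, ← S.Q.map_comp, hσj, S.Q.map_comp, Category.assoc,
        IsIso.hom_inv_id_assoc, ← S.Q.map_comp]
    have h2 : S.Q.map (σj.f ≫ (ρ.s ≫ φ.f)) = S.Q.map (σj.f ≫ (ρ.f ≫ ψ.f)) := by
      rw [← lhs, ← lhs, h0]
    obtain ⟨Rj, r, hr, heq⟩ :=
      (MorphismProperty.map_eq_iff_precomp S.Q (W := S) _ _).1 h2
    exact ⟨_, σj.s, σj.f, σj.hs, hσj, Rj, r, hr, by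
      simpa only [Category.assoc] using heq⟩
  choose Wc tc hc htS hcomm R r hrS heq using key
  have hτ : S (Limits.Sigma.map fun j => r j ≫ tc j) :=
    hstable _ _ _ fun j => S.comp_mem _ _ (hrS j) (htS j)
  have hkv : Sigma.desc (fun j => r j ≫ hc j) ≫ (ρ.s ≫ φ.s)
      = Limits.Sigma.map (fun j => r j ≫ tc j) := by
    apply Sigma.hom_ext
    intro j
    rw [← Category.assoc, Sigma.ι_desc, Sigma.ι_map,
      Category.assoc, ← hcomm j, ← Category.assoc]
  have hIτ : IsIso (S.Q.map (Limits.Sigma.map fun j => r j ≫ tc j)) :=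
    Localization.inverts S.Q S _ hτ
  have hIk : IsIso (S.Q.map (Sigma.desc fun j => r j ≫ hc j)) := by
    have : S.Q.map (Sigma.desc fun j => r j ≫ hc j)
        = S.Q.map (Limits.Sigma.map fun j => r j ≫ tc j) ≫ inv (S.Q.map (ρ.s ≫ φ.s)) := by
      rw [← hkv, S.Q.map_comp, Category.assoc, IsIso.hom_inv_id, Category.comp_id]
    rw [this]
    infer_instance
  have hkg : Sigma.desc (fun j => r j ≫ hc j) ≫ (ρ.s ≫ φ.f)
      = Sigma.desc (fun j => r j ≫ hc j) ≫ (ρ.f ≫ ψ.f) := by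
    apply Sigma.hom_ext
    intro j
    have h4 := heq j
    simp only [← Category.assoc] at h4 ⊢
    rw [Sigma.ι_desc]
    exact h4
  have hg : S.Q.map ρ.s ≫ S.Q.map φ.f = S.Q.map ρ.f ≫ S.Q.map ψ.f := by
    have h3 : S.Q.map (Sigma.desc fun j => r j ≫ hc j) ≫ S.Q.map ρ.s ≫ S.Q.map φ.f
        = S.Q.map (Sigma.desc fun j => r j ≫ hc j) ≫ S.Q.map ρ.f ≫ S.Q.map ψ.f := by
      simpa only [Functor.map_comp] using congrArg S.Q.map hkg
    exact (cancel_epi (S.Q.map (Sigma.desc fun j => r j ≫ hc j))).1 h3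
  rw [ha, hb]
  congr 1
  rw [S.Q.map_comp, S.Q.map_comp, hg]

/-- Existence of descent morphisms. -/
lemma exists_desc
    (hstable : ∀ (X Y : J → C) (f : ∀ j, X j ⟶ Y j),
      (∀ j, S (f j)) → S (Limits.Sigma.map f))
    (X : J → C) (t : Cocone (Discrete.functor X ⋙ S.Q)) :
    ∃ d : S.Q.obj (∐ X) ⟶ t.pt, ∀ j : J, S.Q.map (Sigma.ι X j) ≫ d = t.ι.app ⟨j⟩ := by
  have hES : S.Q.EssSurj := Localization.essSurj S.Q S
  obtain ⟨T₀, ⟨e⟩⟩ : ∃ T₀, Nonempty (S.Q.obj T₀ ≅ t.pt) := ⟨_, ⟨S.Q.objObjPreimageIso t.pt⟩⟩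
  have key : ∀ j : J, ∃ φ : S.RightFraction (X j) T₀,
      t.ι.app ⟨j⟩ ≫ e.inv = φ.map S.Q (Localization.inverts S.Q S) :=
    fun j => Localization.exists_rightFraction S.Q S (t.ι.app ⟨j⟩ ≫ e.inv)
  choose φ hφ using key
  have hσ : S (Limits.Sigma.map (fun j => (φ j).s)) := hstable _ _ _ fun j => (φ j).hs
  have hIσ : IsIso (S.Q.map (Limits.Sigma.map (fun j => (φ j).s))) :=
    Localization.inverts S.Q S _ hσ
  refine ⟨inv (S.Q.map (Limits.Sigma.map (fun j => (φ j).s)))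
    ≫ S.Q.map (Sigma.desc fun j => (φ j).f) ≫ e.hom, fun j => ?_⟩
  have hIs : IsIso (S.Q.map (φ j).s) := Localization.inverts S.Q S _ (φ j).hs
  rw [← cancel_epi (S.Q.map (φ j).s)]
  have h1 : (φ j).s ≫ Sigma.ι X j = Sigma.ι _ j ≫ Limits.Sigma.map (fun j => (φ j).s) := by
    rw [Sigma.ι_map]
  have h2 : t.ι.app ⟨j⟩ = (φ j).map S.Q (Localization.inverts S.Q S) ≫ e.hom := by
    rw [← hφ j, Category.assoc, e.inv_hom_id]
    simp
  rw [h2, ← Category.assoc, ← Category.assoc, ← S.Q.map_comp, h1, S.Q.map_comp,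
    Category.assoc, Category.assoc, IsIso.hom_inv_id_assoc,
    MorphismProperty.RightFraction.map_s_comp_map_assoc, ← Category.assoc,
    ← S.Q.map_comp, Sigma.ι_desc]

/-- Any coproduct cofan remains colimit after localization. -/
lemma isColimit_mapCocone
    (hstable : ∀ (X Y : J → C) (f : ∀ j, X j ⟶ Y j),
      (∀ j, S (f j)) → S (Limits.Sigma.map f))
    (X : J → C) (c : Cofan X) (hc : IsColimit c) :
    Nonempty (IsColimit (S.Q.mapCocone c)) := by
  let c₀ : Cofan X := Cofan.mk (∐ X) (Sigma.ι X)
  have hc₀ : IsColimit c₀ := coproductIsCoproduct X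
  have h₀ : IsColimit (S.Q.mapCocone c₀) :=
    { desc := fun t => (exists_desc S hstable X t).choose
      fac := fun t j => by
        obtain ⟨j⟩ := j
        exact (exists_desc S hstable X t).choose_spec j
      uniq := fun t m hm => by
        apply jointly_epi S hstable X
        intro j
        rw [(exists_desc S hstable X t).choose_spec j]
        exact hm ⟨j⟩ }
  exact ⟨IsColimit.ofIsoColimit h₀
    ((Cocones.functoriality _ S.Q).mapIso (hc₀.uniqueUpToIso hc))⟩

end LocCoprodAux

/-- If `C` has coproducts, `S` is stable under coproducts and admits a right calculus
of fractions, then any coproduct in `C` is still a coproduct in the localization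
`C[S⁻¹]`: the localization functor preserves coproducts. -/
theorem localization_preserves_coproducts_of_rightCalculus
    {C : Type*} [Category C] (S : MorphismProperty C)
    [S.HasRightCalculusOfFractions]
    {J : Type*} [HasCoproducts C]
    (hstable : ∀ (X Y : J → C) (f : ∀ j, X j ⟶ Y j),
      (∀ j, S (f j)) → S (Limits.Sigma.map f)) :
    (∀ (X : J → C) (c : Cofan X), IsColimit c →
      Nonempty (IsColimit (S.Q.mapCocone c))) ∧
    Nonempty (PreservesColimitsOfShape (Discrete J) S.Q) := by
  refine ⟨fun X c hc => LocCoprodAux.isColimit_mapCocone S hstable X c hc, ⟨⟨fun {F} => ?_⟩⟩⟩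
  have e : Discrete.functor (fun j => F.obj ⟨j⟩) ≅ F :=
    Discrete.natIso fun ⟨j⟩ => Iso.refl _
  have : PreservesColimit (Discrete.functor (fun j => F.obj ⟨j⟩)) S.Q :=
    preservesColimit_of_preserves_colimit_cocone (colimit.isColimit _)
      (LocCoprodAux.isColimit_mapCocone S hstable _ _ (colimit.isColimit _)).some
  exact preservesColimit_of_iso_diagram S.Q e
end
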